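/- Let g be a finite-dimensional real Lie algebra and let (r, n) be an r-n structure on g. Then for every natural number k, the map n^k ∘ r : g* → g is skew-symmetric and is a solution of the CYBE. -/

import Mathlib

noncomputable section

open Module

variable {g : Type*} [LieRing g] [LieAlgebra ℝ g]

/-- The coadjoint operator: `(coad X α) Y = -α ⁅X, Y⁆`. -/
def coad (X : g) : Module.Dual ℝ g →ₗ[ℝ] Module.Dual ℝ g :=
  -(LieAlgebra.ad ℝ g X).dualMap

/-- A linear map `r : g* → g` is skew-symmetric if `α (r β) = -β (r α)`. -/
def IsSkew (r : Module.Dual ℝ g →ₗ[ℝ] g) : Prop :=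
  ∀ α β : Module.Dual ℝ g, α (r β) = -β (r α)

/-- The Sklyanin bracket on `g*` defined by `r`. -/
def sklyanin (r : Module.Dual ℝ g →ₗ[ℝ] g) (α β : Module.Dual ℝ g) : Module.Dual ℝ g :=
  coad (r α) β - coad (r β) α

/-- `r` is a solution of the classical Yang-Baxter equation. -/
def IsCYBE (r : Module.Dual ℝ g →ₗ[ℝ] g) : Prop :=
  ∀ α β : Module.Dual ℝ g, r (sklyanin r α β) = ⁅r α, r β⁆

/-- `n : g → g` is a Nijenhuis operator. -/
def IsNijenhuis (n : g →ₗ[ℝ] g) : Prop :=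
  ∀ X Y : g, ⁅n X, n Y⁆ - n ⁅n X, Y⁆ - n ⁅X, n Y⁆ + n (n ⁅X, Y⁆) = 0

/-- `(r, n)` is an r-n structure on `g`. -/
def IsRN (r : Module.Dual ℝ g →ₗ[ℝ] g) (n : g →ₗ[ℝ] g) : Prop :=
  IsSkew r ∧ IsCYBE r ∧ IsNijenhuis n ∧
    (∀ α : Module.Dual ℝ g, n (r α) = r (n.dualMap α)) ∧
    ∀ α β : Module.Dual ℝ g,
      coad (r α) (n.dualMap β) - coad (r β) (n.dualMap α)
        - n.dualMap (coad (r α) β) + n.dualMap (coad (r β) α) = 0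

/-- The Nijenhuis concomitant of two endomorphisms. -/
def nijConcomitant (n' n : g →ₗ[ℝ] g) (X Y : g) : g :=
  ⁅n' X, n Y⁆ + ⁅n X, n' Y⁆ - n' ⁅n X, Y⁆ - n' ⁅X, n Y⁆ - n ⁅n' X, Y⁆ - n ⁅X, n' Y⁆
    + n' (n ⁅X, Y⁆) + n (n' ⁅X, Y⁆)

lemma coad_apply' (X : g) (β : Module.Dual ℝ g) (Y : g) : coad X β Y = -β ⁅X, Y⁆ := rfl

lemma rn_step (r : Module.Dual ℝ g →ₗ[ℝ] g) (n : g →ₗ[ℝ] g) (h : IsRN r n) :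
    IsRN (n ∘ₗ r) n := by
  obtain ⟨hskew, hcybe, hnij, hnr, hconc⟩ := h
  -- pointwise concomitant: β (P (r α) X) = α (P (r β) X) with P Z X = ⁅Z, n X⁆ - n ⁅Z, X⁆
  have hconc' : ∀ α β : Module.Dual ℝ g, ∀ X : g,
      β (⁅r α, n X⁆ - n ⁅r α, X⁆) = α (⁅r β, n X⁆ - n ⁅r β, X⁆) := by
    intro α β X
    have h0 := DFunLike.congr_fun (hconc α β) X
    simp only [LinearMap.sub_apply, LinearMap.add_apply, LinearMap.zero_apply,
      coad_apply', LinearMap.dualMap_apply, map_sub] at h0 ⊢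
    linarith
  -- Nijenhuis in "P" form: n (P Z X) = P (n Z) X
  have hP : ∀ Z X : g, n (⁅Z, n X⁆ - n ⁅Z, X⁆) = ⁅n Z, n X⁆ - n ⁅n Z, X⁆ := by
    intro Z X
    have h1 : ⁅n Z, n X⁆ - n ⁅n Z, X⁆ - (n ⁅Z, n X⁆ - n (n ⁅Z, X⁆)) = 0 := by
      rw [← hnij Z X]; abel
    rw [map_sub]
    exact (sub_eq_zero.mp h1).symm
  refine ⟨?_, ?_, hnij, ?_, ?_⟩
  · -- skew
    intro α β
    simp only [LinearMap.comp_apply]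
    rw [hnr β, hskew α (n.dualMap β), LinearMap.dualMap_apply]
  · -- CYBE
    intro α β
    have key : sklyanin (n ∘ₗ r) α β =
        sklyanin r (n.dualMap α) β + sklyanin r α (n.dualMap β) - n.dualMap (sklyanin r α β) := by
      have hc := hconc α β
      simp only [sklyanin, LinearMap.comp_apply, ← hnr, map_sub]
      rw [eq_comm, ← sub_eq_zero, ← hc]
      abel
    simp only [LinearMap.comp_apply, key, map_add, map_sub]
    rw [hcybe (n.dualMap α) β, hcybe α (n.dualMap β), ← hnr (sklyanin r α β), hcybe α β,
      ← hnr α, ← hnr β]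
    have h1 : ⁅n (r α), n (r β)⁆ - n ⁅n (r α), r β⁆ - n ⁅r α, n (r β)⁆
        + n (n ⁅r α, r β⁆) = 0 := hnij (r α) (r β)
    rw [eq_comm, ← sub_eq_zero, ← h1]
    abel
  · -- n ∘ (n∘r) = (n∘r) ∘ nᵗ
    intro α
    simp only [LinearMap.comp_apply, hnr]
  · -- concomitant of (n∘r, n)
    intro α β
    ext X
    simp only [LinearMap.sub_apply, LinearMap.add_apply, LinearMap.zero_apply,
      coad_apply', LinearMap.dualMap_apply, LinearMap.comp_apply, map_sub]
    have e1 : β ⁅n (r α), n X⁆ - β (n ⁅n (r α), X⁆)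
        = β (n (⁅r α, n X⁆ - n ⁅r α, X⁆)) := by rw [hP]; rw [map_sub]
    have e2 : α ⁅n (r β), n X⁆ - α (n ⁅n (r β), X⁆)
        = α (n (⁅r β, n X⁆ - n ⁅r β, X⁆)) := by rw [hP]; rw [map_sub]
    have e3 : β (n (⁅r α, n X⁆ - n ⁅r α, X⁆)) = α (n (⁅r β, n X⁆ - n ⁅r β, X⁆)) := by
      calc β (n (⁅r α, n X⁆ - n ⁅r α, X⁆))
          = (n.dualMap β) (⁅r α, n X⁆ - n ⁅r α, X⁆) := rfl
        _ = α (⁅r (n.dualMap β), n X⁆ - n ⁅r (n.dualMap β), X⁆) := hconc' α (n.dualMap β) X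
        _ = α (n (⁅r β, n X⁆ - n ⁅r β, X⁆)) := by rw [← hnr β, hP]
    -- goal is a linear rearrangement of e1 = e3 = e2
    have := e1.trans (e3.trans e2.symm)
    linarith

/-- If `(r, n)` is an r-n structure on `g`, then for every natural number `k`
the map `n^k ∘ r : g* → g` is skew-symmetric and a solution of the CYBE. -/
theorem isSkew_and_isCYBE_pow_comp
    {g : Type*} [LieRing g] [LieAlgebra ℝ g] [FiniteDimensional ℝ g]
    (r : Module.Dual ℝ g →ₗ[ℝ] g) (n : g →ₗ[ℝ] g) (h : IsRN r n) :
    ∀ k : ℕ, IsSkew ((n ^ k) ∘ₗ r) ∧ IsCYBE ((n ^ k) ∘ₗ r) := by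
  have main : ∀ k : ℕ, IsRN ((n ^ k) ∘ₗ r) n := by
    intro k
    induction k with
    | zero => simpa [Module.End.one_eq_id] using h
    | succ k ih =>
        have : (n ^ (k + 1)) ∘ₗ r = n ∘ₗ ((n ^ k) ∘ₗ r) := by
          rw [pow_succ']
          rfl
        rw [this]
        exact rn_step _ n ih
  exact fun k => ⟨(main k).1, (main k).2.1⟩
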